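/- Let x, y be complex numbers and set a = 1 + (3/2)x, b = y, c = −x/2. Assume: |c| < 1; |a|²(1+|c|²) + 2Re(a²·conj(c)) < (1−|c|²)²; |b|² < 1 − |c|² − |a|²(1+|c|²)/(1−|c|²) − 2Re(a²·conj(c))/(1−|c|²); and Re(a²·conj(c)) ≥ −|a|²|c|². Then Re(x) < 0 and |y|² < −2Re(x). In particular, with x = λh and y = μ√h for h > 0 and λ, μ ∈ ℂ, membership of (λ, μ) in the mean-square stability domain of the two-step Adams–Bashforth Maruyama (AB2) scheme implies Re(λ) + |μ|²/2 < 0. -/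

import Mathlib

open ComplexConjugate

set_option maxHeartbeats 2000000 in
/-- If `(x, y)` satisfies the asymptotic mean-square stability conditions of the AB2
scheme (with `a = 1 + (3/2)x`, `b = y`, `c = -x/2`), then `Re x < 0` and `|y|² < -2 Re x`.
In particular, with `x = λh`, `y = μ√h`, membership in the MS-stability domain of AB2
implies `Re λ + |μ|²/2 < 0`. -/
theorem stmt_11 (x y : ℂ)
    (a b c : ℂ) (ha : a = 1 + (3 / 2 : ℂ) * x) (hb : b = y) (hc : c = -x / 2)
    (h₁ : ‖c‖ < 1)
    (h₂ : ‖a‖ ^ 2 * (1 + ‖c‖ ^ 2) + 2 * (a ^ 2 * conj c).re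
        < (1 - ‖c‖ ^ 2) ^ 2)
    (h₃ : ‖b‖ ^ 2
        < 1 - ‖c‖ ^ 2
          - ‖a‖ ^ 2 * (1 + ‖c‖ ^ 2) / (1 - ‖c‖ ^ 2)
          - 2 * (a ^ 2 * conj c).re / (1 - ‖c‖ ^ 2))
    (h₄ : (a ^ 2 * conj c).re ≥ -(‖a‖ ^ 2 * ‖c‖ ^ 2)) :
    x.re < 0 ∧ ‖y‖ ^ 2 < -2 * x.re ∧
      (∀ (lam mu : ℂ) (h : ℝ), 0 < h → x = lam * h → y = mu * Real.sqrt h →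
        lam.re + ‖mu‖ ^ 2 / 2 < 0) := by
  set r : ℝ := x.re with hr
  set s : ℝ := x.im with hs
  have hq : 0 ≤ r ^ 2 + s ^ 2 := by positivity
  have hC : ‖c‖ ^ 2 = (r ^ 2 + s ^ 2) / 4 := by
    rw [hc, Complex.sq_norm, Complex.normSq_apply]
    simp [Complex.div_re, Complex.div_im, Complex.normSq_apply]
    ring
  have hA : ‖a‖ ^ 2 = 1 + 3 * r + 9 / 4 * (r ^ 2 + s ^ 2) := by
    rw [ha, Complex.sq_norm, Complex.normSq_apply]
    simp [Complex.add_re, Complex.add_im, Complex.mul_re, Complex.mul_im]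
    norm_num
    ring
  have hR : (a ^ 2 * conj c).re
      = -(r + 3 * (r ^ 2 + s ^ 2) + 9 / 4 * (r ^ 2 + s ^ 2) * r) / 2 := by
    rw [ha, hc]
    simp [pow_two, Complex.mul_re, Complex.mul_im, Complex.add_re, Complex.add_im,
      Complex.div_re, Complex.div_im, Complex.normSq_apply]
    norm_num
    ring
  have hC1 : ‖c‖ ^ 2 < 1 := by
    have := norm_nonneg c
    nlinarith
  have hq4 : r ^ 2 + s ^ 2 < 4 := by
    rw [hC] at hC1; linarith
  have hD : (0:ℝ) < 1 - (r ^ 2 + s ^ 2) / 4 := by linarith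
  have hb2 : (0:ℝ) ≤ ‖b‖ ^ 2 := by positivity
  rw [hC, hA, hR] at h₃ h₄
  -- key algebraic identity
  have hEq : (1 - (r ^ 2 + s ^ 2) / 4
        - (1 + 3 * r + 9 / 4 * (r ^ 2 + s ^ 2)) * (1 + (r ^ 2 + s ^ 2) / 4)
            / (1 - (r ^ 2 + s ^ 2) / 4)
        - 2 * (-(r + 3 * (r ^ 2 + s ^ 2) + 9 / 4 * (r ^ 2 + s ^ 2) * r) / 2)
            / (1 - (r ^ 2 + s ^ 2) / 4)) * (1 - (r ^ 2 + s ^ 2) / 4)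
      = -2 * r - (r ^ 2 + s ^ 2) ^ 2 / 2 + 3 / 2 * r * (r ^ 2 + s ^ 2) := by
    have hDne : (1 - (r ^ 2 + s ^ 2) / 4) ≠ 0 := ne_of_gt hD
    rw [sub_mul, sub_mul, div_mul_cancel₀ _ hDne, div_mul_cancel₀ _ hDne]
    ring
  have h₃' : ‖b‖ ^ 2 * (1 - (r ^ 2 + s ^ 2) / 4)
      < -2 * r - (r ^ 2 + s ^ 2) ^ 2 / 2 + 3 / 2 * r * (r ^ 2 + s ^ 2) := by
    rw [← hEq]
    exact mul_lt_mul_of_pos_right h₃ hD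
  have hE : (0:ℝ) < -2 * r - (r ^ 2 + s ^ 2) ^ 2 / 2 + 3 / 2 * r * (r ^ 2 + s ^ 2) :=
    lt_of_le_of_lt (mul_nonneg hb2 hD.le) h₃'
  have hH : -(r / 2) - 5 / 4 * (r ^ 2 + s ^ 2) - 3 / 8 * (r ^ 2 + s ^ 2) * r
      + 9 / 16 * (r ^ 2 + s ^ 2) ^ 2 ≥ 0 := by nlinarith [h₄]
  have hrneg : r < 0 := by
    by_contra hrr
    push_neg at hrr
    rcases le_or_gt (3 * (r ^ 2 + s ^ 2)) 4 with hcase | hcase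
    · nlinarith [hE, mul_nonneg hrr (by linarith : (0:ℝ) ≤ 4 - 3 * (r ^ 2 + s ^ 2)),
        sq_nonneg (r ^ 2 + s ^ 2)]
    · have hqlb : (0:ℝ) ≤ 21 * (r ^ 2 + s ^ 2) - 20 := by linarith
      nlinarith [mul_pos hE (by linarith : (0:ℝ) < 8 + 6 * (r ^ 2 + s ^ 2)),
        mul_nonneg hH (by linarith : (0:ℝ) ≤ 3 * (r ^ 2 + s ^ 2) - 4),
        mul_nonneg (mul_nonneg hq (by linarith : (0:ℝ) ≤ 4 - (r ^ 2 + s ^ 2))) hqlb]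
  have hy2 : ‖y‖ ^ 2 < -2 * r := by
    have hyb : ‖y‖ ^ 2 = ‖b‖ ^ 2 := by rw [hb]
    rw [hyb]
    have hEle : -2 * r - (r ^ 2 + s ^ 2) ^ 2 / 2 + 3 / 2 * r * (r ^ 2 + s ^ 2)
        ≤ -2 * r * (1 - (r ^ 2 + s ^ 2) / 4) := by
      nlinarith [mul_nonneg (neg_nonneg.mpr hrneg.le) hq, mul_nonneg hq hq]
    have h3'' : ‖b‖ ^ 2 * (1 - (r ^ 2 + s ^ 2) / 4)
        < -2 * r * (1 - (r ^ 2 + s ^ 2) / 4) := lt_of_lt_of_le h₃' hEle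
    exact lt_of_mul_lt_mul_right h3'' hD.le
  refine ⟨hrneg, hy2, ?_⟩
  intro lam mu h hh hxl hym
  have hre : r = lam.re * h := by
    rw [hr, hxl]
    simp [Complex.mul_re, Complex.ofReal_re, Complex.ofReal_im]
  have hym2 : ‖y‖ ^ 2 = ‖mu‖ ^ 2 * h := by
    rw [hym, norm_mul, mul_pow]
    congr 1
    rw [Complex.norm_real, Real.norm_eq_abs, abs_of_nonneg (Real.sqrt_nonneg h), Real.sq_sqrt hh.le]
  have hmh : ‖mu‖ ^ 2 * h < -2 * (lam.re * h) := by
    rw [← hym2, ← hre]; exact hy2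
  nlinarith
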